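/- Let n ≥ 6 be even with 8 ∤ n and 1 ≤ p < q < n/2 with p + q = n/2. Then the number of n-th roots of unity ζ with ζ^{p+q} = −1 or ζ^{q−p} = −1 equals n/2; i.e., the circulant graph Circ(n,{p,q}) has nullity n/2. -/

import Mathlib

open Polynomial Complex

/-- The set of complex m-th roots of -1 has cardinality m. -/
lemma ncard_roots_neg_one (m : ℕ) (hm : 0 < m) :
    {ζ : ℂ | ζ ^ m = -1}.ncard = m := by
  set e : ℂ := Complex.exp (Real.pi * Complex.I / m) with he
  have hm' : (m : ℂ) ≠ 0 := Nat.cast_ne_zero.mpr hm.ne'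
  have hem : e ^ m = -1 := by
    rw [he, ← Complex.exp_nat_mul, mul_div_cancel₀ _ hm', Complex.exp_pi_mul_I]
  have he0 : e ≠ 0 := Complex.exp_ne_zero _
  have himg : {ζ : ℂ | ζ ^ m = -1} = (fun z => e * z) '' {ζ : ℂ | ζ ^ m = 1} := by
    ext z
    simp only [Set.mem_image, Set.mem_setOf_eq]
    constructor
    · intro hz
      refine ⟨z / e, ?_, by field_simp⟩
      rw [div_pow, hz, hem]; norm_num
    · rintro ⟨w, hw, rfl⟩
      rw [mul_pow, hw, hem, mul_one]
  have hset : {ζ : ℂ | ζ ^ m = 1} = ↑(nthRootsFinset m (1 : ℂ)) := by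
    ext z; simp [Polynomial.mem_nthRootsFinset hm (1 : ℂ)]
  rw [himg, Set.ncard_image_of_injective _ (mul_right_injective₀ he0), hset,
    Set.ncard_coe_finset,
    (Complex.isPrimitiveRoot_exp m hm.ne').card_nthRootsFinset]

theorem stmt_18 (n p q : ℕ) (hn : 6 ≤ n) (he : 2 ∣ n) (h8 : ¬ 8 ∣ n)
    (hp : 1 ≤ p) (hpq : p < q) (hq : 2 * q < n) (hsum : p + q = n / 2) :
    {ζ : ℂ | ζ ^ n = 1 ∧ (ζ ^ (p + q) = -1 ∨ ζ ^ (q - p) = -1)}.ncard = n / 2 := by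
  obtain ⟨m, rfl⟩ := he
  have hm6 : 3 ≤ m := by omega
  have hm0 : 0 < m := by omega
  rw [Nat.mul_div_cancel_left m (by norm_num)] at hsum ⊢
  have h4m : ¬ 4 ∣ m := fun ⟨k, hk⟩ => h8 ⟨k, by omega⟩
  set d : ℕ := q - p with hd
  have hdm : d + 2 * p = m := by omega
  have hd0 : 0 < d := by omega
  -- key: the set equals the m-th roots of -1
  have hkey : {ζ : ℂ | ζ ^ (2 * m) = 1 ∧ (ζ ^ (p + q) = -1 ∨ ζ ^ d = -1)}
      = {ζ : ℂ | ζ ^ m = -1} := by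
    ext ζ
    simp only [Set.mem_setOf_eq, hsum]
    constructor
    · rintro ⟨h1, h2 | h2⟩
      · exact h2
      · -- ζ^(2m)=1 and ζ^d = -1 imply ζ^m = -1
        have h2d : ζ ^ (2 * d) = 1 := by
          rw [mul_comm, pow_mul, h2]; norm_num
        set g : ℕ := Nat.gcd d m with hg
        have hg0 : 0 < g := Nat.gcd_pos_of_pos_left _ hd0
        have h2g : ζ ^ (2 * g) = 1 := by
          have := pow_gcd_eq_one.mpr ⟨h2d, h1⟩
          rwa [Nat.gcd_mul_left] at this
        have hgpm : ζ ^ g = 1 ∨ ζ ^ g = -1 := by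
          have : ζ ^ g * ζ ^ g = 1 := by
            rw [← pow_add, ← two_mul]; exact h2g
          exact mul_self_eq_one_iff.mp this
        have hgd : g ∣ d := Nat.gcd_dvd_left _ _
        have hgm : g ∣ m := Nat.gcd_dvd_right _ _
        have hζg : ζ ^ g = -1 := by
          rcases hgpm with h | h
          · exfalso
            obtain ⟨a, ha⟩ := hgd
            rw [ha, pow_mul, h, one_pow] at h2
            exact absurd h2 (by norm_num)
          · exact h
        obtain ⟨a, ha⟩ := hgd
        obtain ⟨b, hb⟩ := hgm
        have hodd_a : Odd a := by
          rw [ha, pow_mul, hζg] at h2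
          by_contra hea
          rw [Nat.not_odd_iff_even.mp hea |>.neg_one_pow] at h2
          exact absurd h2 (by norm_num)
        have hodd_b : Odd b := by
          by_contra heb
          have heb : Even b := Nat.not_odd_iff_even.mp heb
          -- then m even, d = m - 2p even, so g*a even with a odd → g even → 4 ∣ m
          have hmeven : Even m := by
            obtain ⟨k, hk⟩ := heb; exact ⟨g * k, by rw [hb, hk]; ring⟩
          have hdeven : Even d := by
            rcases Nat.even_or_odd d with h | h
            · exact h
            · exfalso; obtain ⟨j, hj⟩ := h; obtain ⟨k, hk⟩ := hmeven; omega
          have hgeven : Even g := by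
            rw [ha] at hdeven
            rcases (Nat.even_mul.mp hdeven) with h | h
            · exact h
            · exact absurd h (Nat.not_even_iff_odd.mpr hodd_a)
          obtain ⟨x, hx⟩ := hgeven
          obtain ⟨y, hy⟩ := heb
          exact h4m ⟨x * y, by rw [hb, hx, hy]; ring⟩
        rw [hb, pow_mul, hζg, hodd_b.neg_one_pow]
    · intro h
      refine ⟨?_, Or.inl h⟩
      rw [mul_comm, pow_mul, h]; norm_num
  rw [hkey, ncard_roots_neg_one m hm0]
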